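/- Let G be a connected graph with spectral radius ρ and positive unit Perron eigenvector x, with maximum entry at u*. If every vertex u in some set V₁' ⊆ V(G) satisfies |N_G(u*) \ N_G(u)| ≤ 10 and ρ ≥ 20, then x_u ≥ (1/2)·x_{u*} for all u ∈ V₁'. Moreover, if |V₁'| ≥ n/3 then x_{u*}² ≤ 12/n. -/

import Mathlib

open Matrix Finset SimpleGraph
open scoped Classical

/-- The spectral radius (largest adjacency eigenvalue) of a finite simple graph,
expressed as the supremum of the Rayleigh quotient over unit vectors. -/
noncomputable def specRad {V : Type*} [Fintype V] (G : SimpleGraph V) : ℝ :=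
  ⨆ x : {x : V → ℝ // ∑ v, x v ^ 2 = 1},
    dotProduct x.1 ((G.adjMatrix ℝ).mulVec x.1)

/-- If `x` is the positive unit Perron eigenvector of a connected graph `G` with
maximum entry at `u*`, every `u ∈ V₁'` satisfies `|N(u*) \ N(u)| ≤ 10`, and
`ρ ≥ 20`, then `x_u ≥ x_{u*}/2` on `V₁'`; moreover if `|V₁'| ≥ n/3` then
`x_{u*}² ≤ 12/n`. -/
theorem stmt15 {V : Type*} [Fintype V] [DecidableEq V] (G : SimpleGraph V)
    [DecidableRel G.Adj] (hconn : G.Connected) (x : V → ℝ) (hpos : ∀ w, 0 < x w)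
    (hunit : ∑ w, x w ^ 2 = 1)
    (heig : (G.adjMatrix ℝ).mulVec x = specRad G • x)
    (ustar : V) (hmax : ∀ w, x w ≤ x ustar)
    (V₁' : Finset V)
    (hdiff : ∀ u ∈ V₁', ((G.neighborFinset ustar \ G.neighborFinset u).card : ℝ) ≤ 10)
    (hrho : 20 ≤ specRad G) :
    (∀ u ∈ V₁', x ustar / 2 ≤ x u) ∧
    ((Fintype.card V : ℝ) / 3 ≤ (V₁'.card : ℝ) →
      x ustar ^ 2 ≤ 12 / (Fintype.card V : ℝ)) := by
  set ρ := specRad G with hρ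
  have key : ∀ u ∈ V₁', x ustar / 2 ≤ x u := by
    intro u hu
    have h1 : ρ * x ustar = ∑ w ∈ G.neighborFinset ustar, x w := by
      have := congrFun heig ustar
      simpa [SimpleGraph.adjMatrix_mulVec_apply, Pi.smul_apply, smul_eq_mul] using this.symm
    have h2 : ρ * x u = ∑ w ∈ G.neighborFinset u, x w := by
      have := congrFun heig u
      simpa [SimpleGraph.adjMatrix_mulVec_apply, Pi.smul_apply, smul_eq_mul] using this.symm
    have hsplit : ∑ w ∈ G.neighborFinset ustar ∩ G.neighborFinset u, x w
        + ∑ w ∈ G.neighborFinset ustar \ G.neighborFinset u, x w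
        = ∑ w ∈ G.neighborFinset ustar, x w :=
      Finset.sum_inter_add_sum_sdiff _ _ _
    have hinter : ∑ w ∈ G.neighborFinset ustar ∩ G.neighborFinset u, x w
        ≤ ∑ w ∈ G.neighborFinset u, x w :=
      Finset.sum_le_sum_of_subset_of_nonneg (Finset.inter_subset_right)
        (fun w _ _ => (hpos w).le)
    have hsd : ∑ w ∈ G.neighborFinset ustar \ G.neighborFinset u, x w
        ≤ 10 * x ustar := by
      calc ∑ w ∈ G.neighborFinset ustar \ G.neighborFinset u, x w
          ≤ (G.neighborFinset ustar \ G.neighborFinset u).card • x ustar :=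
            Finset.sum_le_card_nsmul _ _ _ (fun w _ => hmax w)
        _ = ((G.neighborFinset ustar \ G.neighborFinset u).card : ℝ) * x ustar := by
            rw [nsmul_eq_mul]
        _ ≤ 10 * x ustar :=
            mul_le_mul_of_nonneg_right (hdiff u hu) (hpos ustar).le
    have hmain : ρ * x ustar - ρ * x u ≤ 10 * x ustar := by
      rw [h1, h2]; linarith
    have hxs : 0 < x ustar := hpos ustar
    have hxu : x u ≤ x ustar := hmax u
    nlinarith [mul_nonneg (by linarith : (0:ℝ) ≤ ρ - 20) (by linarith : 0 ≤ x ustar - x u)]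
  refine ⟨key, fun hcard => ?_⟩
  have hn : 0 < (Fintype.card V : ℝ) := by
    have : Nonempty V := ⟨ustar⟩
    exact_mod_cast Fintype.card_pos
  have hsum : (V₁'.card : ℝ) * (x ustar / 2) ^ 2 ≤ 1 := by
    calc (V₁'.card : ℝ) * (x ustar / 2) ^ 2
        = V₁'.card • ((x ustar / 2) ^ 2) := by rw [nsmul_eq_mul]
      _ ≤ ∑ u ∈ V₁', x u ^ 2 := by
          apply Finset.card_nsmul_le_sum
          intro u hu
          have h := key u hu
          have := (hpos ustar).le
          nlinarith
      _ ≤ ∑ w, x w ^ 2 :=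
          Finset.sum_le_sum_of_subset_of_nonneg (Finset.subset_univ _)
            (fun w _ _ => sq_nonneg _)
      _ = 1 := hunit
  rw [le_div_iff₀ hn]
  nlinarith [sq_nonneg (x ustar)]
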